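/- Fundamental Theorem for normal translationally invariant MPS: Let A and B be MPS tensors with matrices in Mat(D), Mat(D') such that blocking L consecutive sites of either yields an injective tensor (i.e. X ↦ (Tr(A^{i₁}⋯A^{i_L} X^T)) is injective, and similarly for B). If they generate the same state on n ≥ 3L sites, then D = D' and there exist an invertible matrix Z and a scalar λ with λⁿ = 1 such that B^i = λ Z⁻¹ A^i Z for all i; Z is unique up to a multiplicative constant. -/

import Mathlib

open Matrix

namespace MPS14Aux

variable {d : ℕ}

/-- Product of matrices along a word. -/
noncomputable def P {D : ℕ} (A : Fin d → Matrix (Fin D) (Fin D) ℂ) {m : ℕ} (w : Fin m → Fin d) :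
    Matrix (Fin D) (Fin D) ℂ :=
  (List.ofFn fun k => A (w k)).prod

lemma P_cons {D m : ℕ} (A : Fin d → Matrix (Fin D) (Fin D) ℂ) (i : Fin d) (w : Fin m → Fin d) :
    P A (Fin.cons i w) = A i * P A w := by
  simp [P, List.ofFn_succ]

lemma P_snoc {D m : ℕ} (A : Fin d → Matrix (Fin D) (Fin D) ℂ) (w : Fin m → Fin d) (i : Fin d) :
    P A (Fin.snoc w i) = P A w * A i := by
  rw [P, List.ofFn_succ', List.prod_concat]
  simp [P, Fin.snoc_castSucc]

lemma P_append {D a b : ℕ} (A : Fin d → Matrix (Fin D) (Fin D) ℂ)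
    (u : Fin a → Fin d) (v : Fin b → Fin d) :
    P A (Fin.append u v) = P A u * P A v := by
  simp [P, List.ofFn_add, Fin.append_left, Fin.append_right]

lemma P_cast {D a b : ℕ} (A : Fin d → Matrix (Fin D) (Fin D) ℂ) (h : a = b)
    (w : Fin b → Fin d) : P A (w ∘ Fin.cast h) = P A w := by
  subst h; rfl

/-- Linear combinations of word products. -/
noncomputable def F {D : ℕ} (A : Fin d → Matrix (Fin D) (Fin D) ℂ) (m : ℕ) :
    ((Fin m → Fin d) → ℂ) →ₗ[ℂ] Matrix (Fin D) (Fin D) ℂ where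
  toFun c := ∑ w : Fin m → Fin d, c w • P A w
  map_add' c c' := by simp [add_smul, Finset.sum_add_distrib]
  map_smul' a c := by simp [Finset.smul_sum, smul_smul]

lemma F_apply {D : ℕ} (A : Fin d → Matrix (Fin D) (Fin D) ℂ) (m : ℕ)
    (c : (Fin m → Fin d) → ℂ) : F A m c = ∑ w : Fin m → Fin d, c w • P A w := rfl

lemma F_single {D : ℕ} (A : Fin d → Matrix (Fin D) (Fin D) ℂ) (m : ℕ)
    (w : Fin m → Fin d) (x : ℂ) : F A m (Pi.single w x) = x • P A w := by
  classical
  rw [F_apply, Finset.sum_eq_single w]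
  · simp
  · intro v _ hv; simp [Pi.single_apply, hv]
  · simp

/-- The word products of length `m` span (expressed by nondegeneracy of the trace pairing). -/
def Spans {D : ℕ} (A : Fin d → Matrix (Fin D) (Fin D) ℂ) (m : ℕ) : Prop :=
  ∀ M : Matrix (Fin D) (Fin D) ℂ, (∀ w : Fin m → Fin d, (P A w * M).trace = 0) → M = 0

lemma spans_of_inj {D L : ℕ} (A : Fin d → Matrix (Fin D) (Fin D) ℂ)
    (hA : Function.Injective fun X : Matrix (Fin D) (Fin D) ℂ =>
      fun i : Fin L → Fin d => (((List.ofFn fun k => A (i k)).prod) * Xᵀ).trace) :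
    Spans A L := by
  intro M hM
  have h := hA (a₁ := Mᵀ) (a₂ := 0) ?_
  · rw [← Matrix.transpose_transpose M, h, Matrix.transpose_zero]
  · funext w
    simpa [P] using hM w

lemma spans_ge {D L m : ℕ} (A : Fin d → Matrix (Fin D) (Fin D) ℂ) (hL : 1 ≤ L)
    (h : Spans A L) (hm : L ≤ m) : Spans A m := by
  induction m, hm using Nat.le_induction with
  | base => exact h
  | succ m hm ih =>
    intro M hM
    have h1 : ∀ i : Fin d, M * A i = 0 := by
      intro i
      apply ih
      intro w
      have h2 := hM (Fin.cons i w)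
      rw [P_cons] at h2
      calc (P A w * (M * A i)).trace = (P A w * M * A i).trace := by rw [Matrix.mul_assoc]
        _ = (A i * (P A w * M)).trace := (Matrix.trace_mul_comm _ _).symm
        _ = 0 := by rw [← Matrix.mul_assoc]; exact h2
    apply h
    intro w
    have hw : M * P A w = 0 := by
      obtain ⟨L', rfl⟩ : ∃ L', L = L' + 1 := ⟨L - 1, (Nat.succ_pred_eq_of_pos hL).symm⟩
      rw [← Fin.cons_self_tail w, P_cons, ← Matrix.mul_assoc, h1, Matrix.zero_mul]
    rw [Matrix.trace_mul_comm, hw, Matrix.trace_zero]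

lemma trace_repr {D : ℕ} (g : Module.Dual ℂ (Matrix (Fin D) (Fin D) ℂ)) :
    ∃ N : Matrix (Fin D) (Fin D) ℂ, ∀ M, g M = (M * N).trace := by
  classical
  refine ⟨Matrix.of fun i j => g (Matrix.single j i 1), fun M => ?_⟩
  have hM := Matrix.matrix_eq_sum_single M
  calc g M = g (∑ i, ∑ j, Matrix.single i j (M i j)) := by rw [← hM]
    _ = ∑ i, ∑ j, M i j * g (Matrix.single i j 1) := by
        rw [map_sum]
        refine Finset.sum_congr rfl fun i _ => ?_
        rw [map_sum]
        refine Finset.sum_congr rfl fun j _ => ?_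
        have h1 : Matrix.single i j (M i j) = M i j • Matrix.single i j (1 : ℂ) := by
          rw [Matrix.smul_single, smul_eq_mul, mul_one]
        rw [h1, g.map_smul, smul_eq_mul]
    _ = (M * Matrix.of fun i j => g (Matrix.single j i 1)).trace := by
        simp only [Matrix.trace, Matrix.diag_apply, Matrix.mul_apply, Matrix.of_apply]

lemma F_surj {D L m : ℕ} (A : Fin d → Matrix (Fin D) (Fin D) ℂ) (hL : 1 ≤ L)
    (hsp : Spans A L) (hm : L ≤ m) : Function.Surjective (F A m) := by
  rw [← LinearMap.range_eq_top]
  by_contra hr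
  obtain ⟨f, hf0, hf⟩ := Submodule.exists_dual_map_eq_bot_of_lt_top
    (lt_top_iff_ne_top.2 hr) inferInstance
  obtain ⟨N, hN⟩ := trace_repr f
  have hNz : N = 0 := by
    apply spans_ge A hL hsp hm
    intro w
    have hmem : P A w ∈ LinearMap.range (F A m) := ⟨Pi.single w 1, by simp [F_single]⟩
    have : f (P A w) ∈ (LinearMap.range (F A m)).map f := Submodule.mem_map_of_mem hmem
    rw [hf] at this
    rw [← hN]
    simpa using this
  apply hf0
  ext M
  rw [hN, hNz, Matrix.mul_zero, Matrix.trace_zero]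
  rfl

/-- Two linear maps agreeing on all word products of length `m` agree (when those span). -/
lemma span_ext {D m : ℕ} {A : Fin d → Matrix (Fin D) (Fin D) ℂ}
    (hsurj : Function.Surjective (F A m)) {V : Type} [AddCommGroup V] [Module ℂ V]
    {T1 T2 : Matrix (Fin D) (Fin D) ℂ →ₗ[ℂ] V}
    (h : ∀ w : Fin m → Fin d, T1 (P A w) = T2 (P A w)) : T1 = T2 := by
  rw [← LinearMap.cancel_right hsurj]
  apply LinearMap.pi_ext'
  intro w
  refine LinearMap.ext fun x => ?_
  simp [F_single, h w]

lemma exists_theta {DA DB L n : ℕ} (hL : 1 ≤ L)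
    (A : Fin d → Matrix (Fin DA) (Fin DA) ℂ) (B : Fin d → Matrix (Fin DB) (Fin DB) ℂ)
    (hspA : Spans A L) (hspB : Spans B L)
    (hst : ∀ w : Fin n → Fin d, (P A w).trace = (P B w).trace)
    (m : ℕ) (hm1 : L ≤ m) (hm2 : m + L ≤ n) :
    ∃ θ : Matrix (Fin DA) (Fin DA) ℂ →ₗ[ℂ] Matrix (Fin DB) (Fin DB) ℂ,
      ∀ w : Fin m → Fin d, θ (P A w) = P B w := by
  classical
  have hmn : m ≤ n := le_trans (Nat.le_add_right _ _) hm2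
  have hcast : n = (n - m) + m := (Nat.sub_add_cancel hmn).symm
  have hker : ∀ c : (Fin m → Fin d) → ℂ, F A m c = 0 → F B m c = 0 := by
    intro c hc
    apply spans_ge B hL hspB (by omega : L ≤ n - m)
    intro v
    have key : ∀ w : Fin m → Fin d, (P B v * P B w).trace = (P A v * P A w).trace := by
      intro w
      have h1 := hst (Fin.append v w ∘ Fin.cast hcast)
      rw [P_cast, P_cast, P_append, P_append] at h1
      exact h1.symm
    calc (P B v * F B m c).trace
        = ∑ w : Fin m → Fin d, c w • (P B v * P B w).trace := by
          rw [F_apply, Matrix.mul_sum, Matrix.trace_sum]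
          refine Finset.sum_congr rfl fun w _ => ?_
          rw [Matrix.mul_smul, Matrix.trace_smul]
      _ = ∑ w : Fin m → Fin d, c w • (P A v * P A w).trace := by
          refine Finset.sum_congr rfl fun w _ => by rw [key w]
      _ = (P A v * F A m c).trace := by
          rw [F_apply, Matrix.mul_sum, Matrix.trace_sum]
          refine (Finset.sum_congr rfl fun w _ => ?_).symm
          rw [Matrix.mul_smul, Matrix.trace_smul]
      _ = 0 := by rw [hc, Matrix.mul_zero, Matrix.trace_zero]
  obtain ⟨g, hg⟩ := (F A m).exists_rightInverse_of_surjective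
    (LinearMap.range_eq_top.2 (F_surj A hL hspA hm1))
  refine ⟨(F B m).comp g, fun w => ?_⟩
  have h1 : F A m (g (P A w)) = P A w := LinearMap.congr_fun hg (P A w)
  have h2 : F A m (g (P A w) - Pi.single w 1) = 0 := by
    rw [map_sub, h1, F_single, one_smul, sub_self]
  have h3 := hker _ h2
  rw [map_sub, F_single, one_smul, sub_eq_zero] at h3
  simpa using h3

lemma one_ne_zero' {D : ℕ} (hD : 0 < D) : (1 : Matrix (Fin D) (Fin D) ℂ) ≠ 0 := by
  intro h
  have := congrFun (congrFun h ⟨0, hD⟩) ⟨0, hD⟩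
  simp [Matrix.one_apply] at this

/-- A matrix commuting with everything is a scalar. -/
lemma scalar_of_commute {D : ℕ} (hD : 0 < D) (M : Matrix (Fin D) (Fin D) ℂ)
    (h : ∀ N, M * N = N * M) : ∃ μ : ℂ, M = μ • 1 := by
  classical
  set z : Fin D := ⟨0, hD⟩
  refine ⟨M z z, ?_⟩
  ext p q
  have h1 := congrFun (congrFun (h (Matrix.single q z (1:ℂ))) p) z
  have hl : (M * Matrix.single q z (1:ℂ)) p z = M p q := by
    simp [Matrix.mul_apply, Matrix.single, Matrix.of_apply]
  have hr : (Matrix.single q z (1:ℂ) * M) p z = (if p = q then M z z else 0) := by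
    by_cases hpq : p = q
    · subst hpq; simp [Matrix.mul_apply, Matrix.single, Matrix.of_apply]
    · simp only [Matrix.mul_apply, Matrix.single, Matrix.of_apply]
      rw [if_neg hpq]
      refine Finset.sum_eq_zero fun x _ => ?_
      rw [if_neg, zero_mul]
      rintro ⟨hx, -⟩
      exact hpq hx.symm
  rw [hl, hr] at h1
  rw [h1]
  simp [Matrix.one_apply]

lemma entry_mul_std_mul {D : ℕ} (X Y : Matrix (Fin D) (Fin D) ℂ) (b c p q : Fin D) :
    (X * Matrix.single b c (1:ℂ) * Y) p q = X p b * Y c q := by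
  classical
  rw [Matrix.mul_assoc]
  have h1 : (Matrix.single b c (1:ℂ) * Y) = Matrix.of fun r s => if r = b then Y c s else 0 := by
    ext r s
    by_cases hrb : r = b
    · subst hrb; simp [Matrix.mul_apply, Matrix.single, Matrix.of_apply]
    · simp only [Matrix.mul_apply, Matrix.single, Matrix.of_apply]
      rw [if_neg hrb]
      refine Finset.sum_eq_zero fun x _ => ?_
      rw [if_neg, zero_mul]
      rintro ⟨hx, -⟩
      exact hrb hx.symm
  rw [h1]
  simp [Matrix.mul_apply]

/-- Two families intertwined through arbitrary middle matrices are proportional. -/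
lemma proportional {ι : Type} {D : ℕ}
    (X Bm : ι → Matrix (Fin D) (Fin D) ℂ)
    (h : ∀ (i j : ι) (M : Matrix (Fin D) (Fin D) ℂ), X i * M * Bm j = Bm i * M * X j)
    (i0 : ι) (hX : X i0 ≠ 0) : ∃ lam : ℂ, ∀ i, Bm i = lam • X i := by
  classical
  have hscal : ∀ (i j : ι) (p b c q : Fin D),
      X i p b * Bm j c q = Bm i p b * X j c q := by
    intro i j p b c q
    have h1 := congrFun (congrFun (h i j (Matrix.single b c (1:ℂ))) p) q
    rwa [entry_mul_std_mul, entry_mul_std_mul] at h1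
  obtain ⟨a0, b0, hab⟩ : ∃ a b, X i0 a b ≠ 0 := by
    by_contra hcon
    push_neg at hcon
    exact hX (by ext a b; simpa using hcon a b)
  refine ⟨Bm i0 a0 b0 / X i0 a0 b0, fun j => ?_⟩
  ext p q
  have h2 := hscal i0 j a0 b0 p q
  simp only [Matrix.smul_apply, smul_eq_mul]
  rw [div_mul_eq_mul_div, eq_div_iff hab]
  linear_combination h2

lemma exists_trace_ne {D L n : ℕ} (A : Fin d → Matrix (Fin D) (Fin D) ℂ) (hD : 0 < D)
    (hL : 1 ≤ L) (hsp : Spans A L) (hn : L ≤ n) :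
    ∃ w : Fin n → Fin d, (P A w).trace ≠ 0 := by
  by_contra h
  push_neg at h
  have h1 : (1 : Matrix (Fin D) (Fin D) ℂ) = 0 :=
    spans_ge A hL hsp hn 1 (fun w => by rw [Matrix.mul_one]; exact h w)
  exact one_ne_zero' hD h1

lemma exists_A_ne {D L : ℕ} (A : Fin d → Matrix (Fin D) (Fin D) ℂ) (hD : 0 < D)
    (hL : 1 ≤ L) (hsp : Spans A L) : ∃ i, A i ≠ 0 := by
  by_contra h
  push_neg at h
  have h1 : (1 : Matrix (Fin D) (Fin D) ℂ) = 0 := by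
    apply hsp
    intro w
    have hw : P A w = 0 := by
      obtain ⟨L', rfl⟩ : ∃ L', L = L' + 1 := ⟨L - 1, (Nat.succ_pred_eq_of_pos hL).symm⟩
      rw [← Fin.cons_self_tail w, P_cons, h, Matrix.zero_mul]
    rw [hw, Matrix.zero_mul, Matrix.trace_zero]
  exact one_ne_zero' hD h1

lemma P_conj {DA DB : ℕ} (A : Fin d → Matrix (Fin DA) (Fin DA) ℂ)
    (B : Fin d → Matrix (Fin DB) (Fin DB) ℂ) (lam : ℂ)
    (W : Matrix (Fin DB) (Fin DA) ℂ) (Z : Matrix (Fin DA) (Fin DB) ℂ)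
    (hZW : Z * W = 1) (hWZ : W * Z = 1)
    (hB : ∀ i, B i = lam • (W * A i * Z)) {m : ℕ} (w : Fin m → Fin d) :
    P B w = lam ^ m • (W * P A w * Z) := by
  induction m with
  | zero =>
    have h0 : ∀ {DD : ℕ} (C : Fin d → Matrix (Fin DD) (Fin DD) ℂ) (v : Fin 0 → Fin d),
        P C v = 1 := by intro DD C v; simp [P]
    rw [h0, h0, pow_zero, one_smul, Matrix.mul_one, hWZ]
  | succ m ih =>
    rw [← Fin.cons_self_tail w, P_cons, P_cons, hB, ih]
    rw [Matrix.smul_mul, Matrix.mul_smul, smul_smul, ← pow_succ']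
    congr 1
    simp only [Matrix.mul_assoc]
    rw [← Matrix.mul_assoc Z W, hZW, Matrix.one_mul]

/-- A unital algebra isomorphism between matrix algebras is conjugation by invertibles. -/
lemma algebra_iso_conj {D D' : ℕ} (hD : 0 < D)
    (ψ : Matrix (Fin D) (Fin D) ℂ →ₗ[ℂ] Matrix (Fin D') (Fin D') ℂ)
    (hmul : ∀ X Y, ψ (X * Y) = ψ X * ψ Y)
    (hinj : Function.Injective ψ)
    (hsurj : Function.Surjective ψ) :
    D = D' ∧ ∃ (Zm : Matrix (Fin D') (Fin D) ℂ) (Wm : Matrix (Fin D) (Fin D') ℂ),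
      Zm * Wm = 1 ∧ Wm * Zm = 1 ∧ ∀ X, ψ X = Zm * X * Wm := by
  classical
  set z : Fin D := ⟨0, hD⟩ with hz
  have hE0 : ψ (Matrix.single z z (1:ℂ)) ≠ 0 := by
    intro h
    have h1 : Matrix.single z z (1:ℂ) = 0 := hinj (by rw [h, map_zero])
    have := congrFun (congrFun h1 z) z
    simp [Matrix.single] at this
  obtain ⟨a0, b0, hab⟩ : ∃ a b, ψ (Matrix.single z z (1:ℂ)) a b ≠ 0 := by
    by_contra hcon
    push_neg at hcon
    exact hE0 (by ext a b; simpa using hcon a b)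
  set Zm : Matrix (Fin D') (Fin D) ℂ :=
    Matrix.of fun a k => ψ (Matrix.single k z (1:ℂ)) a b0 with hZm
  have hstd : ∀ i j : Fin D,
      ψ (Matrix.single i j (1:ℂ)) * Zm = Zm * Matrix.single i j (1:ℂ) := by
    intro i j
    ext a k
    have hl : (ψ (Matrix.single i j (1:ℂ)) * Zm) a k
        = ψ (Matrix.single i j (1:ℂ) * Matrix.single k z (1:ℂ)) a b0 := by
      rw [hmul]
      simp [Matrix.mul_apply, hZm]
    have hr : (Zm * Matrix.single i j (1:ℂ)) a k
        = (if j = k then ψ (Matrix.single i z (1:ℂ)) a b0 else 0) := by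
      simp only [Matrix.mul_apply, hZm, Matrix.of_apply, Matrix.single]
      by_cases hjk : j = k
      · subst hjk
        rw [Finset.sum_eq_single i]
        · simp
        · intro x _ hx
          simp [Ne.symm hx]
        · simp
      · rw [if_neg hjk]
        refine Finset.sum_eq_zero fun x _ => ?_
        rw [if_neg, mul_zero]
        rintro ⟨-, hx⟩
        exact hjk hx
    rw [hl, hr]
    by_cases hjk : j = k
    · subst hjk
      rw [Matrix.single_mul_single_same, mul_one, if_pos rfl]
    · rw [Matrix.single_mul_single_of_ne (h := hjk), map_zero, if_neg hjk]
      rfl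
  have hint : ∀ X, ψ X * Zm = Zm * X := by
    intro X
    have hX := Matrix.matrix_eq_sum_single X
    calc ψ X * Zm = (∑ i, ∑ j, X i j • ψ (Matrix.single i j (1:ℂ))) * Zm := by
          conv_lhs => rw [hX]
          rw [map_sum]
          congr 1
          refine Finset.sum_congr rfl fun i _ => ?_
          rw [map_sum]
          refine Finset.sum_congr rfl fun j _ => ?_
          have h1 : Matrix.single i j (X i j) = X i j • Matrix.single i j (1:ℂ) := by
            rw [Matrix.smul_single, smul_eq_mul, mul_one]
          rw [h1, ψ.map_smul]
      _ = ∑ i, ∑ j, X i j • (ψ (Matrix.single i j (1:ℂ)) * Zm) := by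
          rw [Matrix.sum_mul]
          refine Finset.sum_congr rfl fun i _ => ?_
          rw [Matrix.sum_mul]
          refine Finset.sum_congr rfl fun j _ => ?_
          rw [Matrix.smul_mul]
      _ = ∑ i, ∑ j, X i j • (Zm * Matrix.single i j (1:ℂ)) := by
          refine Finset.sum_congr rfl fun i _ => Finset.sum_congr rfl fun j _ => ?_
          rw [hstd]
      _ = Zm * X := by
          conv_rhs => rw [hX]
          rw [Matrix.mul_sum]
          refine Finset.sum_congr rfl fun i _ => ?_
          rw [Matrix.mul_sum]
          refine Finset.sum_congr rfl fun j _ => ?_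
          have h1 : Matrix.single i j (X i j) = X i j • Matrix.single i j (1:ℂ) := by
            rw [Matrix.smul_single, smul_eq_mul, mul_one]
          rw [h1, Matrix.mul_smul]
  have hZcol : Zm a0 z ≠ 0 := hab
  have hZne : Zm ≠ 0 := by
    intro h
    rw [h] at hZcol
    exact hZcol rfl
  -- injectivity of multiplication by Zm
  have hiz : ∀ cv : Fin D → ℂ, Zm.mulVec cv = 0 → cv = 0 := by
    intro cv hcv
    by_contra hc0
    obtain ⟨t, ht⟩ : ∃ t, cv t ≠ 0 := Function.ne_iff.mp hc0
    apply hZne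
    ext a k
    set Xm : Matrix (Fin D) (Fin D) ℂ :=
      Matrix.of fun pp qq => (Pi.single k 1 : Fin D → ℂ) pp * (if qq = t then (cv t)⁻¹ else 0) with hXm
    have h1 : Xm.mulVec cv = Pi.single k (1:ℂ) := by
      ext pp
      simp only [Matrix.mulVec, dotProduct, hXm, Matrix.of_apply]
      rw [Finset.sum_eq_single t]
      · rw [if_pos rfl, mul_assoc, inv_mul_cancel₀ ht, mul_one]
      · intro x _ hx
        rw [if_neg hx, mul_zero, zero_mul]
      · simp
    have h2 : Zm.mulVec (Pi.single k (1:ℂ)) = 0 := by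
      rw [← h1, Matrix.mulVec_mulVec, ← hint, ← Matrix.mulVec_mulVec, hcv,
        Matrix.mulVec_zero]
    have h3 := congrFun h2 a
    simp only [Matrix.mulVec, dotProduct] at h3
    rw [Finset.sum_eq_single k] at h3
    · simpa using h3
    · intro x _ hx
      simp [Pi.single_apply, hx]
    · simp
  -- surjectivity of multiplication by Zm
  have hsz : ∀ u : Fin D' → ℂ, ∃ x, Zm.mulVec x = u := by
    intro u
    set yc : Fin D' → ℂ := Zm.mulVec (Pi.single z (1:ℂ)) with hyc
    have hycol : ∀ a, yc a = Zm a z := by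
      intro a
      simp only [hyc, Matrix.mulVec, dotProduct]
      rw [Finset.sum_eq_single z]
      · simp
      · intro x _ hx
        simp [Pi.single_apply, hx]
      · simp
    have hyne : yc a0 ≠ 0 := by rw [hycol]; exact hZcol
    set Nm : Matrix (Fin D') (Fin D') ℂ :=
      Matrix.of fun pp qq => u pp * (if qq = a0 then (yc a0)⁻¹ else 0) with hNm
    have h1 : Nm.mulVec yc = u := by
      ext pp
      simp only [Matrix.mulVec, dotProduct, hNm, Matrix.of_apply]
      rw [Finset.sum_eq_single a0]
      · rw [if_pos rfl, mul_assoc, inv_mul_cancel₀ hyne, mul_one]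
      · intro x _ hx
        rw [if_neg hx, mul_zero, zero_mul]
      · simp
    obtain ⟨Xs, hXs⟩ := hsurj Nm
    refine ⟨Xs.mulVec (Pi.single z (1:ℂ)), ?_⟩
    rw [Matrix.mulVec_mulVec, ← hint, ← Matrix.mulVec_mulVec, ← hyc, hXs, h1]
  have hbij : Function.Bijective (Matrix.toLin' Zm) := by
    constructor
    · intro x y hxy
      have h1 : Zm.mulVec (x - y) = 0 := by
        have := sub_eq_zero.2 hxy
        rw [← map_sub] at this
        simpa [Matrix.toLin'_apply] using this
      have := hiz _ h1
      exact sub_eq_zero.1 this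
    · intro u
      obtain ⟨x, hx⟩ := hsz u
      exact ⟨x, by simpa [Matrix.toLin'_apply] using hx⟩
  set e := LinearEquiv.ofBijective (Matrix.toLin' Zm) hbij with he
  have hDD : D = D' := by
    have h1 := e.finrank_eq
    simpa [Module.finrank_fin_fun] using h1
  set Wm : Matrix (Fin D) (Fin D') ℂ :=
    LinearMap.toMatrix' (e.symm : (Fin D' → ℂ) →ₗ[ℂ] (Fin D → ℂ)) with hWm
  have hZWm : Zm * Wm = 1 := by
    apply Matrix.toLin'.injective
    rw [Matrix.toLin'_mul, hWm, Matrix.toLin'_toMatrix', Matrix.toLin'_one]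
    refine LinearMap.ext fun x => ?_
    have h1 : Matrix.toLin' Zm ((e.symm : (Fin D' → ℂ) →ₗ[ℂ] (Fin D → ℂ)) x)
        = e (e.symm x) := rfl
    simp only [LinearMap.comp_apply, LinearMap.id_apply]
    rw [h1, e.apply_symm_apply]
  have hWZm : Wm * Zm = 1 := by
    apply Matrix.toLin'.injective
    rw [Matrix.toLin'_mul, hWm, Matrix.toLin'_toMatrix', Matrix.toLin'_one]
    refine LinearMap.ext fun x => ?_
    have h1 : Matrix.toLin' Zm x = e x := rfl
    simp only [LinearMap.comp_apply, LinearMap.id_apply]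
    rw [h1]
    exact e.symm_apply_apply x
  refine ⟨hDD, Zm, Wm, hZWm, hWZm, fun X => ?_⟩
  calc ψ X = ψ X * (Zm * Wm) := by rw [hZWm, Matrix.mul_one]
    _ = (ψ X * Zm) * Wm := by rw [Matrix.mul_assoc]
    _ = Zm * X * Wm := by rw [hint]

lemma P_nil {D : ℕ} (C : Fin d → Matrix (Fin D) (Fin D) ℂ) (v : Fin 0 → Fin d) :
    P C v = 1 := by simp [P]

lemma map_F {DA DB m : ℕ} {A : Fin d → Matrix (Fin DA) (Fin DA) ℂ}
    {B : Fin d → Matrix (Fin DB) (Fin DB) ℂ}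
    (θ : Matrix (Fin DA) (Fin DA) ℂ →ₗ[ℂ] Matrix (Fin DB) (Fin DB) ℂ)
    (hθ : ∀ w : Fin m → Fin d, θ (P A w) = P B w) (c : (Fin m → Fin d) → ℂ) :
    θ (F A m c) = F B m c := by
  rw [F_apply, map_sum, F_apply]
  refine Finset.sum_congr rfl fun w _ => ?_
  rw [θ.map_smul, hθ w]

lemma core {n L D D' : ℕ} (hL : 1 ≤ L) (hn : 3 * L ≤ n) (hD : 0 < D) (hD' : 0 < D')
    (A : Fin d → Matrix (Fin D) (Fin D) ℂ) (B : Fin d → Matrix (Fin D') (Fin D') ℂ)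
    (hspA : Spans A L) (hspB : Spans B L)
    (hst : ∀ w : Fin n → Fin d, (P A w).trace = (P B w).trace) :
    D = D' ∧ ∃ (Z : Matrix (Fin D) (Fin D') ℂ) (W : Matrix (Fin D') (Fin D) ℂ) (lam : ℂ),
      Z * W = 1 ∧ W * Z = 1 ∧ lam ^ n = 1 ∧ (∀ i, B i = lam • (W * A i * Z)) := by
  classical
  have hstBA : ∀ w : Fin n → Fin d, (P B w).trace = (P A w).trace := fun w => (hst w).symm
  obtain ⟨φ, hφ⟩ := exists_theta hL A B hspA hspB hst L le_rfl (by omega)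
  obtain ⟨φ', hφ'⟩ := exists_theta hL B A hspB hspA hstBA L le_rfl (by omega)
  obtain ⟨θ1, hθ1⟩ := exists_theta hL A B hspA hspB hst (L + 1) (by omega) (by omega)
  obtain ⟨θ2, hθ2⟩ := exists_theta hL A B hspA hspB hst (2 * L) (by omega) (by omega)
  obtain ⟨θ2', hθ2'⟩ := exists_theta hL B A hspB hspA hstBA (2 * L) (by omega) (by omega)
  have hsurjL := F_surj A hL hspA le_rfl
  have hsurjL2 := F_surj A hL hspA (by omega : L ≤ 2 * L)
  have hsurjLB := F_surj B hL hspB le_rfl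
  -- φ is bijective
  have hretr : ∀ X, φ' (φ X) = X := by
    suffices h : φ'.comp φ = LinearMap.id by
      intro X
      simpa using LinearMap.congr_fun h X
    apply span_ext hsurjL
    intro w
    simp only [LinearMap.comp_apply, LinearMap.id_apply]
    rw [hφ w, hφ' w]
  have hφinj : Function.Injective φ := fun X Y h => by rw [← hretr X, h, hretr]
  have hφsurj : Function.Surjective φ := by
    intro Y
    obtain ⟨c, hc⟩ := hsurjLB Y
    exact ⟨F A L c, by rw [map_F φ hφ c, hc]⟩
  -- multiplicativity through θ2
  have ha1 : ∀ (u : Fin L → Fin d) (Y : Matrix (Fin D) (Fin D) ℂ),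
      θ2 (P A u * Y) = P B u * φ Y := by
    intro u
    suffices h : θ2 ∘ₗ LinearMap.mulLeft ℂ (P A u)
        = LinearMap.mulLeft ℂ (P B u) ∘ₗ φ by
      intro Y
      simpa using LinearMap.congr_fun h Y
    apply span_ext hsurjL
    intro v
    simp only [LinearMap.comp_apply, LinearMap.mulLeft_apply]
    have hc2 : 2 * L = L + L := by omega
    have e1 : P A u * P A v = P A (Fin.append u v ∘ Fin.cast hc2) := by
      rw [P_cast, P_append]
    have e2 : P B u * P B v = P B (Fin.append u v ∘ Fin.cast hc2) := by
      rw [P_cast, P_append]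
    rw [hφ v, e1, hθ2, ← e2]
  have ha : ∀ X Y : Matrix (Fin D) (Fin D) ℂ, θ2 (X * Y) = φ X * φ Y := by
    intro X Y
    suffices h : θ2 ∘ₗ LinearMap.mulRight ℂ Y = LinearMap.mulRight ℂ (φ Y) ∘ₗ φ by
      simpa using LinearMap.congr_fun h X
    apply span_ext hsurjL
    intro u
    simp only [LinearMap.comp_apply, LinearMap.mulRight_apply]
    rw [ha1 u Y, hφ u]
  -- φ 1 is a scalar μ
  have hone : ∀ N, φ 1 * N = N * φ 1 := by
    intro N
    obtain ⟨X, rfl⟩ := hφsurj N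
    calc φ 1 * φ X = θ2 (1 * X) := (ha 1 X).symm
      _ = θ2 (X * 1) := by rw [Matrix.one_mul, Matrix.mul_one]
      _ = φ X * φ 1 := ha X 1
  obtain ⟨μ, hμ⟩ := scalar_of_commute hD' (φ 1) hone
  have hθ2φ : ∀ X, θ2 X = μ • φ X := by
    intro X
    calc θ2 X = θ2 (X * 1) := by rw [Matrix.mul_one]
      _ = φ X * φ 1 := ha X 1
      _ = μ • φ X := by rw [hμ, Matrix.mul_smul, Matrix.mul_one]
  have hretr2 : ∀ X, θ2' (θ2 X) = X := by
    suffices h : θ2'.comp θ2 = LinearMap.id by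
      intro X
      simpa using LinearMap.congr_fun h X
    apply span_ext hsurjL2
    intro w
    simp only [LinearMap.comp_apply, LinearMap.id_apply]
    rw [hθ2 w, hθ2' w]
  have hμ0 : μ ≠ 0 := by
    intro h0
    have hz : θ2 (1 : Matrix (Fin D) (Fin D) ℂ) = 0 := by
      rw [hθ2φ, h0, zero_smul]
    have h2 : (1 : Matrix (Fin D) (Fin D) ℂ) = 0 := by
      rw [← hretr2 1, hz, map_zero]
    exact one_ne_zero' hD h2
  have hφmul : ∀ X Y, μ • φ (X * Y) = φ X * φ Y := fun X Y => by rw [← hθ2φ, ha]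
  -- one-site relations
  have hb : ∀ (i : Fin d) (X : Matrix (Fin D) (Fin D) ℂ), θ1 (A i * X) = B i * φ X := by
    intro i
    suffices h : θ1 ∘ₗ LinearMap.mulLeft ℂ (A i) = LinearMap.mulLeft ℂ (B i) ∘ₗ φ by
      intro X
      simpa using LinearMap.congr_fun h X
    apply span_ext hsurjL
    intro v
    simp only [LinearMap.comp_apply, LinearMap.mulLeft_apply]
    rw [hφ v, ← P_cons A i v, hθ1, P_cons]
  have hc : ∀ (i : Fin d) (X : Matrix (Fin D) (Fin D) ℂ), θ1 (X * A i) = φ X * B i := by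
    intro i
    suffices h : θ1 ∘ₗ LinearMap.mulRight ℂ (A i) = LinearMap.mulRight ℂ (B i) ∘ₗ φ by
      intro X
      simpa using LinearMap.congr_fun h X
    apply span_ext hsurjL
    intro u
    simp only [LinearMap.comp_apply, LinearMap.mulRight_apply]
    rw [hφ u, ← P_snoc A u i, hθ1, P_snoc]
  have hstar : ∀ (i j : Fin d) (Y : Matrix (Fin D) (Fin D) ℂ),
      φ (A i * Y) * B j = B i * φ (Y * A j) := by
    intro i j Y
    have e1 := hc j (A i * Y)
    have e2 := hb i (Y * A j)
    rw [← e1, ← e2, Matrix.mul_assoc]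
  have hcomm : ∀ (i j : Fin d) (M : Matrix (Fin D') (Fin D') ℂ),
      φ (A i) * M * B j = B i * M * φ (A j) := by
    intro i j M
    obtain ⟨Y, rfl⟩ := hφsurj M
    calc φ (A i) * φ Y * B j = (μ • φ (A i * Y)) * B j := by rw [hφmul]
      _ = μ • (φ (A i * Y) * B j) := by rw [Matrix.smul_mul]
      _ = μ • (B i * φ (Y * A j)) := by rw [hstar]
      _ = B i * (μ • φ (Y * A j)) := by rw [Matrix.mul_smul]
      _ = B i * (φ Y * φ (A j)) := by rw [hφmul]
      _ = B i * φ Y * φ (A j) := by rw [Matrix.mul_assoc]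
  obtain ⟨i0, hi0⟩ := exists_A_ne A hD hL hspA
  have hφA0 : φ (A i0) ≠ 0 := fun h => hi0 (hφinj (by rw [h, map_zero]))
  obtain ⟨lam0, hlam0⟩ := proportional (fun i => φ (A i)) B hcomm i0 hφA0
  -- normalize φ to an algebra isomorphism ψ
  set ψ : Matrix (Fin D) (Fin D) ℂ →ₗ[ℂ] Matrix (Fin D') (Fin D') ℂ := μ⁻¹ • φ with hψdef
  have hψ_apply : ∀ X, ψ X = μ⁻¹ • φ X := fun X => rfl
  have hψmul : ∀ X Y, ψ (X * Y) = ψ X * ψ Y := by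
    intro X Y
    rw [hψ_apply, hψ_apply, hψ_apply, Matrix.smul_mul, Matrix.mul_smul, smul_smul,
      ← hφmul X Y, smul_smul]
    congr 1
    field_simp
  have hψinj : Function.Injective ψ := by
    intro X Y h
    apply hφinj
    have h2 := congrArg (fun M => μ • M) h
    simpa [hψ_apply, smul_smul, mul_inv_cancel₀ hμ0] using h2
  have hψsurj : Function.Surjective ψ := by
    intro N
    obtain ⟨X, hX⟩ := hφsurj N
    refine ⟨μ • X, ?_⟩
    rw [hψ_apply, φ.map_smul, smul_smul, inv_mul_cancel₀ hμ0, one_smul, hX]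
  obtain ⟨hDD, Zm, Wm, hZWm, hWZm, hconj⟩ := algebra_iso_conj hD ψ hψmul hψinj hψsurj
  have hφconj : ∀ X, φ X = μ • (Zm * X * Wm) := by
    intro X
    rw [← hconj, hψ_apply, smul_smul, mul_inv_cancel₀ hμ0, one_smul]
  have hBi : ∀ i, B i = (lam0 * μ) • (Zm * A i * Wm) := by
    intro i
    rw [hlam0 i, hφconj, smul_smul]
  refine ⟨hDD, Wm, Zm, lam0 * μ, hWZm, hZWm, ?_, hBi⟩
  obtain ⟨w0, hw0⟩ := exists_trace_ne A hD hL hspA (by omega : L ≤ n)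
  have h1 := hst w0
  rw [P_conj A B (lam0 * μ) Zm Wm hWZm hZWm hBi w0] at h1
  rw [Matrix.trace_smul] at h1
  have h2 : (Zm * P A w0 * Wm).trace = (P A w0).trace := by
    rw [Matrix.trace_mul_cycle, hWZm, Matrix.one_mul]
  rw [h2] at h1
  have h1' : (P A w0).trace = (lam0 * μ) ^ n * (P A w0).trace := by
    simpa [smul_eq_mul] using h1
  have h3 : ((lam0 * μ) ^ n - 1) * (P A w0).trace = 0 := by
    linear_combination -h1'
  rcases mul_eq_zero.mp h3 with h4 | h4
  · linear_combination h4
  · exact absurd h4 hw0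

lemma uniqueness {n L D D' : ℕ} (hL : 1 ≤ L) (hD : 0 < D) (hn0 : n ≠ 0)
    (A : Fin d → Matrix (Fin D) (Fin D) ℂ) (B : Fin d → Matrix (Fin D') (Fin D') ℂ)
    (hspA : Spans A L)
    (Z : Matrix (Fin D) (Fin D') ℂ) (W : Matrix (Fin D') (Fin D) ℂ) (lam : ℂ)
    (h1 : Z * W = 1) (h2 : W * Z = 1) (h3 : lam ^ n = 1)
    (h4 : ∀ i, B i = lam • (W * A i * Z))
    (Z' : Matrix (Fin D) (Fin D') ℂ) (W' : Matrix (Fin D') (Fin D) ℂ) (lam' : ℂ)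
    (h1' : Z' * W' = 1) (h2' : W' * Z' = 1) (h3' : lam' ^ n = 1)
    (h4' : ∀ i, B i = lam' • (W' * A i * Z')) :
    ∃ c : ℂ, c ≠ 0 ∧ Z' = c • Z := by
  classical
  have hsurjL := F_surj A hL hspA le_rfl
  have hlam : lam ≠ 0 := by
    intro h
    rw [h, zero_pow hn0] at h3
    exact zero_ne_one h3
  have hlam' : lam' ≠ 0 := by
    intro h
    rw [h, zero_pow hn0] at h3'
    exact zero_ne_one h3'
  obtain ⟨G, hG⟩ : ∃ G : Matrix (Fin D) (Fin D) ℂ, G = Z * W' := ⟨_, rfl⟩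
  obtain ⟨cc, hcc⟩ : ∃ c : ℂ, c = lam⁻¹ * lam' := ⟨_, rfl⟩
  have hGA : ∀ i, A i * G = cc • (G * A i) := by
    intro i
    have e : lam • (W * A i * Z) = lam' • (W' * A i * Z') := by
      rw [← h4 i, ← h4' i]
    have e2 := congrArg (fun M => Z * M * W') e
    simp only [Matrix.mul_smul, Matrix.smul_mul] at e2
    have eL : Z * (W * A i * Z) * W' = A i * G := by
      rw [hG]
      simp only [Matrix.mul_assoc]
      rw [← Matrix.mul_assoc Z W, h1, Matrix.one_mul]
    have eR : Z * (W' * A i * Z') * W' = G * A i := by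
      rw [hG]
      simp only [Matrix.mul_assoc]
      rw [h1', Matrix.mul_one, ← Matrix.mul_assoc]
    rw [eL, eR] at e2
    calc A i * G = lam⁻¹ • (lam • (A i * G)) := by
          rw [smul_smul, inv_mul_cancel₀ hlam, one_smul]
      _ = lam⁻¹ • (lam' • (G * A i)) := by rw [e2]
      _ = cc • (G * A i) := by rw [smul_smul, ← hcc]
  have hGw : ∀ {m : ℕ} (w : Fin m → Fin d), P A w * G = cc ^ m • (G * P A w) := by
    intro m
    induction m with
    | zero =>
      intro w
      rw [P_nil, pow_zero, one_smul, Matrix.one_mul, Matrix.mul_one]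
    | succ m ih =>
      intro w
      rw [← Fin.cons_self_tail w, P_cons]
      calc A (w 0) * P A (Fin.tail w) * G
          = A (w 0) * (P A (Fin.tail w) * G) := by rw [Matrix.mul_assoc]
        _ = A (w 0) * (cc ^ m • (G * P A (Fin.tail w))) := by rw [ih]
        _ = cc ^ m • (A (w 0) * G * P A (Fin.tail w)) := by
            rw [Matrix.mul_smul, ← Matrix.mul_assoc]
        _ = cc ^ m • ((cc • (G * A (w 0))) * P A (Fin.tail w)) := by rw [hGA]
        _ = cc ^ (m + 1) • (G * (A (w 0) * P A (Fin.tail w))) := by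
            rw [Matrix.smul_mul, smul_smul, pow_succ, Matrix.mul_assoc]
  have hspanned : ∀ X : Matrix (Fin D) (Fin D) ℂ, X * G = cc ^ L • (G * X) := by
    suffices h : LinearMap.mulRight ℂ G = cc ^ L • LinearMap.mulLeft ℂ G by
      intro X
      simpa using LinearMap.congr_fun h X
    apply span_ext hsurjL
    intro w
    simp only [LinearMap.mulRight_apply, LinearMap.smul_apply, LinearMap.mulLeft_apply]
    exact hGw w
  have hZne : Z ≠ 0 := by
    intro h
    apply one_ne_zero' hD
    rw [← h1, h, Matrix.zero_mul]
  have hGZ' : G * Z' = Z := by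
    rw [hG, Matrix.mul_assoc, h2', Matrix.mul_one]
  have hGne : G ≠ 0 := by
    intro h
    apply hZne
    rw [← hGZ', h, Matrix.zero_mul]
  have hccL : cc ^ L = 1 := by
    have h5 := hspanned 1
    rw [Matrix.one_mul, Matrix.mul_one] at h5
    by_contra hne
    have h6 : (1 - cc ^ L) • G = 0 := by
      rw [sub_smul, one_smul, ← h5, sub_self]
    rcases smul_eq_zero.mp h6 with h7 | h7
    · exact hne (by linear_combination -h7)
    · exact hGne h7
  have hGcomm : ∀ N, G * N = N * G := by
    intro N
    rw [hspanned N, hccL, one_smul]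
  obtain ⟨γ, hγ⟩ := scalar_of_commute hD G hGcomm
  have hγ0 : γ ≠ 0 := by
    intro h
    apply hGne
    rw [hγ, h, zero_smul]
  refine ⟨γ⁻¹, inv_ne_zero hγ0, ?_⟩
  have h6 : Z = γ • Z' := by
    rw [← hGZ', hγ, Matrix.smul_mul, Matrix.one_mul]
  rw [h6, smul_smul, inv_mul_cancel₀ hγ0, one_smul]

end MPS14Aux

/-- Fundamental theorem for translationally invariant normal MPS on
`n ≥ 3L` sites, where blocking `L` consecutive sites yields an injective tensor. -/
theorem fundamental_theorem_TI_normal_MPS (n L d D D' : ℕ) (hL : 1 ≤ L) (hn : 3 * L ≤ n)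
    (A : Fin d → Matrix (Fin D) (Fin D) ℂ) (B : Fin d → Matrix (Fin D') (Fin D') ℂ)
    (hA : Function.Injective fun X : Matrix (Fin D) (Fin D) ℂ =>
      fun i : Fin L → Fin d => (((List.ofFn fun k => A (i k)).prod) * Xᵀ).trace)
    (hB : Function.Injective fun X : Matrix (Fin D') (Fin D') ℂ =>
      fun i : Fin L → Fin d => (((List.ofFn fun k => B (i k)).prod) * Xᵀ).trace)
    (hstate : ∀ i : Fin n → Fin d,
      ((List.ofFn fun k => A (i k)).prod).trace = ((List.ofFn fun k => B (i k)).prod).trace) :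
    D = D' ∧
    ∃ (Z : Matrix (Fin D) (Fin D') ℂ) (W : Matrix (Fin D') (Fin D) ℂ) (lam : ℂ),
      Z * W = 1 ∧ W * Z = 1 ∧ lam ^ n = 1 ∧
      (∀ i, B i = lam • (W * A i * Z)) ∧
      ∀ (Z' : Matrix (Fin D) (Fin D') ℂ) (W' : Matrix (Fin D') (Fin D) ℂ) (lam' : ℂ),
        Z' * W' = 1 → W' * Z' = 1 → lam' ^ n = 1 →
        (∀ i, B i = lam' • (W' * A i * Z')) →
        ∃ c : ℂ, c ≠ 0 ∧ Z' = c • Z := by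
  classical
  have hspA := MPS14Aux.spans_of_inj A hA
  have hspB := MPS14Aux.spans_of_inj B hB
  have hst : ∀ w : Fin n → Fin d, (MPS14Aux.P A w).trace = (MPS14Aux.P B w).trace := hstate
  rcases Nat.eq_zero_or_pos D with hD0 | hD
  · subst hD0
    have hD'0 : D' = 0 := by
      by_contra h
      have hD' : 0 < D' := Nat.pos_of_ne_zero h
      have h1 : (1 : Matrix (Fin D') (Fin D') ℂ) = 0 := by
        apply MPS14Aux.spans_ge B hL hspB (by omega : L ≤ n)
        intro w
        rw [Matrix.mul_one, ← hst w]
        simp [Matrix.trace]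
      exact MPS14Aux.one_ne_zero' hD' h1
    subst hD'0
    exact ⟨rfl, 0, 0, 1, Subsingleton.elim _ _, Subsingleton.elim _ _, one_pow n,
      fun i => Subsingleton.elim _ _,
      fun Z' W' lam' _ _ _ _ => ⟨1, one_ne_zero, Subsingleton.elim _ _⟩⟩
  rcases Nat.eq_zero_or_pos D' with hD'0 | hD'
  · exfalso
    subst hD'0
    have h1 : (1 : Matrix (Fin D) (Fin D) ℂ) = 0 := by
      apply MPS14Aux.spans_ge A hL hspA (by omega : L ≤ n)
      intro w
      rw [Matrix.mul_one, hst w]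
      simp [Matrix.trace]
    exact MPS14Aux.one_ne_zero' hD h1
  obtain ⟨hDD, Z, W, lam, h1, h2, h3, h4⟩ :=
    MPS14Aux.core hL hn hD hD' A B hspA hspB hst
  refine ⟨hDD, Z, W, lam, h1, h2, h3, h4, ?_⟩
  intro Z' W' lam' h1' h2' h3' h4'
  exact MPS14Aux.uniqueness hL hD (by omega : n ≠ 0) A B hspA Z W lam h1 h2 h3 h4
    Z' W' lam' h1' h2' h3' h4'
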